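/- Let c₁, c₂ > 0. Then there exists a constant C > 0, depending only on c₁ and c₂, such that for every A ∈ ℝ and every nonzero ξ ∈ ℝ³, ∫_{ℝ³} (1/|g|)·exp(−c₁·(|g| + 2(g·ξ)/|g| + A/|g|)²)·exp(−c₂|g|²) dg ≤ C/|ξ|. -/

import Mathlib

set_option maxHeartbeats 1000000

open MeasureTheory Measure Set Metric Real
open scoped ENNReal

/-- Gaussian integral with affine argument, in `ℝ≥0∞` form. -/
lemma gauss_affine (c a b : ℝ) (hc : 0 < c) (hb : 0 < b) :
    ∫⁻ x : ℝ, ENNReal.ofReal (Real.exp (-c * (a + b * x) ^ 2)) =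
      ENNReal.ofReal (Real.sqrt (π / c) / b) := by
  have hint : Integrable (fun x : ℝ => Real.exp (-c * (a + x) ^ 2)) := by
    simpa [add_comm] using (integrable_exp_neg_mul_sq hc).comp_add_right a
  have hint2 : Integrable (fun x : ℝ => Real.exp (-c * (a + b * x) ^ 2)) :=
    hint.comp_mul_left' hb.ne'
  rw [← ofReal_integral_eq_lintegral_ofReal hint2
    (Filter.Eventually.of_forall fun x => (Real.exp_pos _).le)]
  congr 1
  have h1 : ∫ x : ℝ, Real.exp (-c * (a + b * x) ^ 2)
      = |b⁻¹| • ∫ y : ℝ, Real.exp (-c * (a + y) ^ 2) :=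
    Measure.integral_comp_mul_left (fun y => Real.exp (-c * (a + y) ^ 2)) b
  have h2 : ∫ y : ℝ, Real.exp (-c * (a + y) ^ 2) = ∫ y : ℝ, Real.exp (-c * y ^ 2) := by
    have := integral_add_right_eq_self (μ := volume)
      (fun y : ℝ => Real.exp (-c * y ^ 2)) a
    rw [← this]
    congr 1 with y
    rw [add_comm]
  rw [h1, h2, abs_of_pos (inv_pos.2 hb), smul_eq_mul, integral_gaussian]
  ring

lemma integral_r_exp (c : ℝ) (hc : 0 < c) :
    ∫ r in Ioi (0:ℝ), r * Real.exp (-c * r ^ 2) = (2 * c)⁻¹ := by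
  have A : ∀ x : ℝ, HasDerivAt (fun y => -(2 * c)⁻¹ * Real.exp (-c * y ^ 2))
      (x * Real.exp (-c * x ^ 2)) x := by
    intro x
    refine (((hasDerivAt_pow 2 x).const_mul (-c)).exp.const_mul (-(2 * c)⁻¹)).congr_deriv ?_
    field_simp
    ring
  have B : Filter.Tendsto (fun y : ℝ => -(2 * c)⁻¹ * Real.exp (-c * y ^ 2))
      Filter.atTop (nhds (-(2 * c)⁻¹ * 0)) := by
    refine Filter.Tendsto.const_mul _ ?_
    exact Real.tendsto_exp_atBot.comp
      ((Filter.tendsto_pow_atTop two_ne_zero).const_mul_atTop_of_neg (neg_lt_zero.2 hc))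
  have := integral_Ioi_of_hasDerivAt_of_tendsto' (a := 0) (fun x _ => A x)
    (integrable_mul_exp_neg_mul_sq hc).integrableOn B
  simpa using this

lemma lintegral_fun_norm_E2 (f : ℝ → ℝ≥0∞) (hf : Measurable f) :
    ∫⁻ (x : EuclideanSpace ℝ (Fin 2)), f ‖x‖ =
      (volume : Measure (EuclideanSpace ℝ (Fin 2))).toSphere univ *
        ∫⁻ y in Ioi (0:ℝ), ENNReal.ofReal y * f y := by
  set E := EuclideanSpace ℝ (Fin 2) with hE
  set μ : Measure E := volume with hμ
  have hdim : Module.finrank ℝ E = 2 := finrank_euclideanSpace_fin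
  have h1 : ∫⁻ (x : E), f ‖x‖ ∂μ
      = ∫⁻ (x : ({(0:E)}ᶜ : Set E)), f ‖(x : E)‖ ∂(μ.comap (↑)) := by
    rw [lintegral_subtype_comap (measurableSet_singleton (0:E)).compl
      (fun y : E => f ‖y‖), restrict_compl_singleton]
  have hmeas : Measurable fun p : sphere (0:E) 1 × Ioi (0:ℝ) => f p.2 :=
    hf.comp (measurable_subtype_coe.comp measurable_snd)
  have h2 : ∫⁻ (x : ({(0:E)}ᶜ : Set E)), f ‖(x : E)‖ ∂(μ.comap (↑))
      = ∫⁻ (p : sphere (0:E) 1 × Ioi (0:ℝ)), f p.2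
          ∂(μ.toSphere.prod (volumeIoiPow (Module.finrank ℝ E - 1))) := by
    rw [← (μ.measurePreserving_homeomorphUnitSphereProd).lintegral_comp hmeas]
    exact lintegral_congr fun x => by
      simp [homeomorphUnitSphereProd_apply_snd_coe]
  have h3 : ∫⁻ (p : sphere (0:E) 1 × Ioi (0:ℝ)), f p.2
          ∂(μ.toSphere.prod (volumeIoiPow (Module.finrank ℝ E - 1)))
      = μ.toSphere univ *
          ∫⁻ (r : Ioi (0:ℝ)), f r ∂(volumeIoiPow (Module.finrank ℝ E - 1)) := by
    rw [lintegral_prod _ hmeas.aemeasurable]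
    simp only [lintegral_const]
    rw [mul_comm]
  have h4 : ∫⁻ (r : Ioi (0:ℝ)), f r ∂(volumeIoiPow (Module.finrank ℝ E - 1))
      = ∫⁻ y in Ioi (0:ℝ), ENNReal.ofReal y * f y := by
    have hmg : Measurable (fun r : Ioi (0:ℝ) => f ↑r) := hf.comp measurable_subtype_coe
    have hmd : Measurable (fun r : Ioi (0:ℝ) => ENNReal.ofReal (r.1 ^ (2-1))) := by fun_prop
    rw [hdim, Measure.volumeIoiPow, lintegral_withDensity_eq_lintegral_mul _ hmd hmg]
    simp only [Pi.mul_apply]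
    rw [lintegral_subtype_comap measurableSet_Ioi
        (fun y : ℝ => ENNReal.ofReal (y ^ (2-1)) * f y)]
    simp
  rw [h1, h2, h3, h4]

/-- One-dimensional change of variables for the Lebesgue (lower) integral. -/
lemma lintegral_image_eq_lintegral_abs_deriv_mul' {s : Set ℝ} {f f' : ℝ → ℝ}
    (hs : MeasurableSet s) (hf' : ∀ x ∈ s, HasDerivWithinAt f (f' x) s x)
    (hf : Set.InjOn f s) (g : ℝ → ℝ≥0∞) :
    ∫⁻ x in f '' s, g x = ∫⁻ x in s, ENNReal.ofReal |f' x| * g (f x) := by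
  simpa only [ContinuousLinearMap.det_toSpanSingleton] using
    lintegral_image_eq_lintegral_abs_det_fderiv_mul volume hs
      (fun x hx => (hf' x hx).hasFDerivWithinAt) hf g

/-- Substitution `r = √(x² + ρ²)` on `(0, ∞)`. -/
lemma subst_sqrt (x : ℝ) (g : ℝ → ℝ≥0∞) :
    ∫⁻ ρ in Ioi (0:ℝ), ENNReal.ofReal ρ * g (Real.sqrt (x^2 + ρ^2)) =
      ∫⁻ r in Ioi |x|, ENNReal.ofReal r * g r := by
  have hpos : ∀ ρ : ℝ, ρ ∈ Ioi (0:ℝ) → 0 < x^2 + ρ^2 := by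
    intro ρ hρ
    have h1 : (0:ℝ) < ρ^2 := pow_pos (mem_Ioi.1 hρ) 2
    have h2 : (0:ℝ) ≤ x^2 := sq_nonneg x
    linarith
  have hderiv : ∀ ρ ∈ Ioi (0:ℝ), HasDerivWithinAt (fun ρ => Real.sqrt (x^2 + ρ^2))
      (ρ / Real.sqrt (x^2 + ρ^2)) (Ioi 0) ρ := by
    intro ρ hρ
    have h1 : HasDerivAt (fun ρ : ℝ => x^2 + ρ^2) (2*ρ) ρ := by
      simpa using ((hasDerivAt_pow 2 ρ).const_add (x^2))
    have h2 := (Real.hasDerivAt_sqrt (hpos ρ hρ).ne').comp ρ h1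
    have hsq : Real.sqrt (x^2 + ρ^2) ≠ 0 := (Real.sqrt_pos.2 (hpos ρ hρ)).ne'
    refine h2.hasDerivWithinAt.congr_deriv ?_
    field_simp
  have hmono : StrictMonoOn (fun ρ => Real.sqrt (x^2 + ρ^2)) (Ioi 0) := by
    intro a ha b hb hab
    apply Real.sqrt_lt_sqrt (by positivity)
    have : a^2 < b^2 := by
      apply pow_lt_pow_left₀ hab (le_of_lt ha)
      norm_num
    linarith
  have himg : (fun ρ => Real.sqrt (x^2 + ρ^2)) '' Ioi 0 = Ioi |x| := by
    apply Set.eq_of_subset_of_subset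
    · rintro _ ⟨ρ, hρ, rfl⟩
      rw [mem_Ioi]
      have : |x| = Real.sqrt (x^2) := (Real.sqrt_sq_eq_abs x).symm
      rw [this]
      apply Real.sqrt_lt_sqrt (by positivity)
      have : (0:ℝ) < ρ^2 := pow_pos (mem_Ioi.1 hρ) 2
      linarith
    · intro r hr
      rw [mem_Ioi] at hr
      have hr0 : 0 < r := lt_of_le_of_lt (abs_nonneg x) hr
      have hx2 : x^2 < r^2 := by
        have := abs_nonneg x
        calc x^2 = |x|^2 := (sq_abs x).symm
          _ < r^2 := by apply pow_lt_pow_left₀ hr this; norm_num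
      refine ⟨Real.sqrt (r^2 - x^2), ?_, ?_⟩
      · rw [mem_Ioi]
        apply Real.sqrt_pos.2
        linarith
      · show Real.sqrt (x^2 + (Real.sqrt (r^2 - x^2))^2) = r
        rw [Real.sq_sqrt (by linarith : (0:ℝ) ≤ r^2 - x^2),
          show x^2 + (r^2 - x^2) = r^2 by ring, Real.sqrt_sq hr0.le]
  have := lintegral_image_eq_lintegral_abs_deriv_mul' measurableSet_Ioi hderiv
    (hmono.injOn) (fun r => ENNReal.ofReal r * g r)
  rw [himg] at this
  rw [this]
  apply setLIntegral_congr_fun measurableSet_Ioi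
  intro ρ hρ
  have ht : 0 < Real.sqrt (x^2 + ρ^2) := Real.sqrt_pos.2 (hpos ρ hρ)
  have hρ0 : 0 ≤ ρ := (mem_Ioi.1 hρ).le
  have key : ENNReal.ofReal (ρ / Real.sqrt (x^2 + ρ^2)) *
      (ENNReal.ofReal (Real.sqrt (x^2 + ρ^2)) * g (Real.sqrt (x^2 + ρ^2)))
      = ENNReal.ofReal ρ * g (Real.sqrt (x^2 + ρ^2)) := by
    rw [← mul_assoc, ← ENNReal.ofReal_mul (div_nonneg hρ0 ht.le),
      div_mul_cancel₀ _ ht.ne']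
  beta_reduce
  rw [abs_of_nonneg (div_nonneg hρ0 ht.le), key]


/-- The decay estimate (bound (b7a)) in case II of the proof of Theorem 1. -/
theorem gaussian_shifted_integral_bound
    (c₁ c₂ : ℝ) (hc₁ : 0 < c₁) (hc₂ : 0 < c₂) :
    ∃ C > (0 : ℝ), ∀ A : ℝ, ∀ ξ : EuclideanSpace ℝ (Fin 3), ξ ≠ 0 →
      (∫ g : EuclideanSpace ℝ (Fin 3),
          (1 / ‖g‖) *
            Real.exp (-c₁ * (‖g‖ + 2 * (inner ℝ g ξ : ℝ) / ‖g‖ + A / ‖g‖) ^ 2) *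
            Real.exp (-c₂ * ‖g‖ ^ 2)) ≤ C / ‖ξ‖ := by
  classical
  set c₀ : ℝ≥0∞ := (volume : Measure (EuclideanSpace ℝ (Fin 2))).toSphere univ with hc₀def
  have hc₀top : c₀ ≠ ⊤ := measure_ne_top _ _
  have hc₀pos : 0 < c₀ := by
    rw [hc₀def, Measure.toSphere_apply_univ]
    have h1 : (0:ℝ≥0∞) < volume (ball (0 : EuclideanSpace ℝ (Fin 2)) 1) :=
      measure_ball_pos _ _ one_pos
    have h2 : (Module.finrank ℝ (EuclideanSpace ℝ (Fin 2)) : ℝ≥0∞) ≠ 0 := by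
      simp [finrank_euclideanSpace_fin]
    exact ENNReal.mul_pos h2 h1.ne'
  have hc₀real : 0 < c₀.toReal := ENNReal.toReal_pos hc₀pos.ne' hc₀top
  have hsqrtpos : 0 < Real.sqrt (π / c₁) := Real.sqrt_pos.2 (div_pos pi_pos hc₁)
  refine ⟨c₀.toReal * (Real.sqrt (π / c₁) / (4 * c₂)), by positivity, ?_⟩
  set C : ℝ := c₀.toReal * (Real.sqrt (π / c₁) / (4 * c₂)) with hCdef
  intro A ξ hξ
  set s : ℝ := ‖ξ‖ with hsdef
  have hspos : 0 < s := norm_pos_iff.2 hξ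
  -- the integrand, and its nonnegativity/measurability
  set F : EuclideanSpace ℝ (Fin 3) → ℝ := fun g =>
    (1 / ‖g‖) *
      Real.exp (-c₁ * (‖g‖ + 2 * (inner ℝ g ξ : ℝ) / ‖g‖ + A / ‖g‖) ^ 2) *
      Real.exp (-c₂ * ‖g‖ ^ 2) with hFdef
  have hFnn : ∀ g, 0 ≤ F g := fun g => by
    rw [hFdef]
    positivity
  have hnorm : Measurable fun g : EuclideanSpace ℝ (Fin 3) => ‖g‖ := measurable_norm
  have hinnermeas : Measurable fun g : EuclideanSpace ℝ (Fin 3) => (inner ℝ g ξ : ℝ) :=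
    (continuous_id.inner continuous_const).measurable
  have hFmeas : Measurable F := by
    rw [hFdef]
    refine Measurable.mul (Measurable.mul (measurable_const.div hnorm) ?_) ?_
    · exact Real.measurable_exp.comp
        ((((hnorm.add ((measurable_const.mul hinnermeas).div hnorm)).add
          (measurable_const.div hnorm)).pow_const 2).const_mul (-c₁))
    · exact Real.measurable_exp.comp ((hnorm.pow_const 2).const_mul (-c₂))
  -- pass to the lower Lebesgue integral
  rw [integral_eq_lintegral_of_nonneg_ae (Filter.Eventually.of_forall hFnn)
    hFmeas.aestronglyMeasurable]
  refine ENNReal.toReal_le_of_le_ofReal (by positivity) ?_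
  -- the integrand in adapted coordinates
  set Φ : ℝ → ℝ → ℝ≥0∞ := fun x r =>
    ENNReal.ofReal (1 / r * Real.exp (-c₁ * (r + 2 * (s * x) / r + A / r) ^ 2) *
      Real.exp (-c₂ * r ^ 2)) with hΦdef
  have hΦm : Measurable (fun p : ℝ × ℝ => Φ p.1 p.2) := by
    rw [hΦdef]
    fun_prop
  -- an orthonormal basis whose first vector is ξ/‖ξ‖
  have hunit : ‖s⁻¹ • ξ‖ = 1 := by
    rw [norm_smul, norm_inv, Real.norm_eq_abs, abs_of_pos hspos, ← hsdef,
      inv_mul_cancel₀ hspos.ne']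
  have hv : Orthonormal ℝ (Set.restrict {0} (fun _ : Fin 3 => s⁻¹ • ξ)) := by
    rw [orthonormal_iff_ite]
    rintro ⟨i, hi⟩ ⟨j, hj⟩
    simp only [Set.mem_singleton_iff] at hi hj
    subst hi; subst hj
    simp only [Set.restrict_apply, Subtype.mk.injEq, if_pos rfl, if_true]
    rw [real_inner_self_eq_norm_mul_norm]
    change ‖s⁻¹ • ξ‖ * ‖s⁻¹ • ξ‖ = 1
    rw [hunit]
    norm_num
  obtain ⟨b, hb⟩ := Orthonormal.exists_orthonormalBasis_extension_of_card_eq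
    (𝕜 := ℝ) (by simp [finrank_euclideanSpace]) hv
  have hb0 : b 0 = s⁻¹ • ξ := hb 0 rfl
  have hξb : ξ = s • b 0 := by rw [hb0, smul_inv_smul₀ hspos.ne']
  have hinner : ∀ v : EuclideanSpace ℝ (Fin 3),
      (inner ℝ (b.repr.symm v) ξ : ℝ) = s * v 0 := by
    intro v
    rw [hξb, real_inner_smul_right]
    congr 1
    rw [real_inner_comm, ← OrthonormalBasis.repr_apply_apply,
      LinearIsometryEquiv.apply_symm_apply]
  -- Step 1 : rotate
  have step1 : ∫⁻ g : EuclideanSpace ℝ (Fin 3), ENNReal.ofReal (F g)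
      = ∫⁻ v : EuclideanSpace ℝ (Fin 3), Φ (v 0) ‖v‖ := by
    rw [← (b.measurePreserving_repr_symm).lintegral_comp hFmeas.ennreal_ofReal]
    refine lintegral_congr fun v => ?_
    rw [hFdef, hΦdef]
    simp only
    rw [hinner v, LinearIsometryEquiv.norm_map]
  -- Step 2 : to plain pi-coordinates
  have hm2 : Measurable fun y : Fin 3 → ℝ =>
      Φ (y 0) (Real.sqrt (∑ i, (y i) ^ 2)) := by
    refine hΦm.comp (Measurable.prodMk (measurable_pi_apply 0) ?_)
    exact Real.continuous_sqrt.measurable.comp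
      (Finset.measurable_sum _ fun i _ => (measurable_pi_apply i).pow_const 2)
  have step2 : ∫⁻ v : EuclideanSpace ℝ (Fin 3), Φ (v 0) ‖v‖
      = ∫⁻ y : Fin 3 → ℝ, Φ (y 0) (Real.sqrt (∑ i, (y i) ^ 2)) := by
    have hmE : Measurable fun v : EuclideanSpace ℝ (Fin 3) => Φ (v 0) ‖v‖ :=
      hΦm.comp (Measurable.prodMk ((measurable_pi_apply 0).comp (PiLp.volume_preserving_ofLp (Fin 3)).measurable) measurable_norm)
    rw [← ((EuclideanSpace.volume_preserving_symm_measurableEquiv_toLp (Fin 3)).symm).lintegral_comp hmE]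
    refine lintegral_congr fun y => ?_
    have hn : ‖(MeasurableEquiv.toLp 2 (Fin 3 → ℝ)).symm.symm y‖
        = Real.sqrt (∑ i, (y i) ^ 2) := by
      rw [EuclideanSpace.norm_eq]
      congr 1
      refine Finset.sum_congr rfl fun i _ => ?_
      rw [Real.norm_eq_abs, sq_abs]
      rfl
    rw [hn]
    rfl
  -- Step 3 : split off the first coordinate
  have hm3 : Measurable fun p : ℝ × (Fin 2 → ℝ) =>
      Φ p.1 (Real.sqrt (p.1 ^ 2 + ∑ j, (p.2 j) ^ 2)) := by
    refine hΦm.comp (Measurable.prodMk measurable_fst ?_)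
    refine Real.continuous_sqrt.measurable.comp ?_
    exact (measurable_fst.pow_const 2).add
      (Finset.measurable_sum _ fun j _ => ((measurable_pi_apply j).comp measurable_snd).pow_const 2)
  have step3 : ∫⁻ y : Fin 3 → ℝ, Φ (y 0) (Real.sqrt (∑ i, (y i) ^ 2))
      = ∫⁻ p : ℝ × (Fin 2 → ℝ), Φ p.1 (Real.sqrt (p.1 ^ 2 + ∑ j, (p.2 j) ^ 2)) := by
    rw [← ((volume_preserving_piFinSuccAbove (fun _ : Fin 3 => ℝ) 0).symm).lintegral_comp hm2]
    refine lintegral_congr fun p => ?_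
    have hsymm : (MeasurableEquiv.piFinSuccAbove (fun _ : Fin 3 => ℝ) 0).symm p
        = Fin.insertNth 0 p.1 p.2 := rfl
    have h0 : ((MeasurableEquiv.piFinSuccAbove (fun _ : Fin 3 => ℝ) 0).symm p) 0 = p.1 := by
      rw [hsymm]
      simp
    have hsum : ∑ i, (((MeasurableEquiv.piFinSuccAbove (fun _ : Fin 3 => ℝ) 0).symm p) i) ^ 2
        = p.1 ^ 2 + ∑ j, (p.2 j) ^ 2 := by
      rw [hsymm, Fin.insertNth_zero, Fin.sum_univ_succ]
      simp
    rw [h0, hsum]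
  -- Step 4 : Fubini
  have step4 : ∫⁻ p : ℝ × (Fin 2 → ℝ), Φ p.1 (Real.sqrt (p.1 ^ 2 + ∑ j, (p.2 j) ^ 2))
      = ∫⁻ x : ℝ, ∫⁻ w : Fin 2 → ℝ, Φ x (Real.sqrt (x ^ 2 + ∑ j, (w j) ^ 2)) := by
    rw [volume_eq_prod, lintegral_prod _ hm3.aemeasurable]
  -- Step 5 : polar coordinates in the last two variables, and substitution
  have step5 : ∀ x : ℝ, ∫⁻ w : Fin 2 → ℝ, Φ x (Real.sqrt (x ^ 2 + ∑ j, (w j) ^ 2))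
      = c₀ * ∫⁻ r in Ioi |x|, ENNReal.ofReal r * Φ x r := by
    intro x
    have hmx : Measurable fun w : Fin 2 → ℝ => Φ x (Real.sqrt (x ^ 2 + ∑ j, (w j) ^ 2)) := by
      refine hΦm.comp (Measurable.prodMk measurable_const ?_)
      exact Real.continuous_sqrt.measurable.comp (measurable_const.add
        (Finset.measurable_sum _ fun j _ => (measurable_pi_apply j).pow_const 2))
    have e1 : ∫⁻ w : Fin 2 → ℝ, Φ x (Real.sqrt (x ^ 2 + ∑ j, (w j) ^ 2))
        = ∫⁻ w : EuclideanSpace ℝ (Fin 2), Φ x (Real.sqrt (x ^ 2 + ‖w‖ ^ 2)) := by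
      rw [← (EuclideanSpace.volume_preserving_symm_measurableEquiv_toLp (Fin 2)).lintegral_comp hmx]
      refine lintegral_congr fun w => ?_
      have hw : ‖w‖ ^ 2 = ∑ j, ((MeasurableEquiv.toLp 2 (Fin 2 → ℝ)).symm w j) ^ 2 := by
        rw [EuclideanSpace.norm_eq, Real.sq_sqrt (Finset.sum_nonneg fun i _ => sq_nonneg _)]
        exact Finset.sum_congr rfl fun i _ => by rw [Real.norm_eq_abs, sq_abs]; rfl
      rw [← hw]
    have hmρ : Measurable fun ρ : ℝ => Φ x (Real.sqrt (x ^ 2 + ρ ^ 2)) := by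
      refine hΦm.comp (Measurable.prodMk measurable_const ?_)
      exact Real.continuous_sqrt.measurable.comp (measurable_const.add (measurable_id.pow_const 2))
    have e2 := lintegral_fun_norm_E2 (fun ρ => Φ x (Real.sqrt (x ^ 2 + ρ ^ 2))) hmρ
    rw [e1, e2, subst_sqrt x (Φ x)]
  -- Step 6 : swap the order of integration
  set G : ℝ → ℝ → ℝ≥0∞ := fun x r =>
    (Ioi |x|).indicator (fun r => ENNReal.ofReal r * Φ x r) r with hGdef
  have hGmeas : Measurable (fun p : ℝ × ℝ => G p.1 p.2) := by
    have hSm : MeasurableSet {p : ℝ × ℝ | |p.1| < p.2} :=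
      measurableSet_lt (measurable_fst.abs) measurable_snd
    have hKm : Measurable fun p : ℝ × ℝ => ENNReal.ofReal p.2 * Φ p.1 p.2 :=
      (measurable_snd.ennreal_ofReal).mul hΦm
    have : (fun p : ℝ × ℝ => G p.1 p.2)
        = {p : ℝ × ℝ | |p.1| < p.2}.indicator (fun p => ENNReal.ofReal p.2 * Φ p.1 p.2) := by
      funext p
      rw [hGdef]
      simp only [Set.indicator_apply, Set.mem_Ioi, Set.mem_setOf_eq]
    rw [this]
    exact hKm.indicator hSm
  have step6 : ∫⁻ x : ℝ, ∫⁻ r, G x r = ∫⁻ r : ℝ, ∫⁻ x, G x r :=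
    lintegral_lintegral_swap hGmeas.aemeasurable
  -- Step 7 : the Gaussian bound for the inner integral
  have step7 : ∀ r : ℝ, ∫⁻ x, G x r ≤ (Ioi (0:ℝ)).indicator
      (fun r => ENNReal.ofReal (Real.sqrt (π / c₁) / (2 * s) * (r * Real.exp (-c₂ * r ^ 2)))) r := by
    intro r
    rcases le_or_gt r 0 with hr | hr
    · have hz : ∀ x, G x r = 0 := by
        intro x
        rw [hGdef]
        refine Set.indicator_of_notMem ?_ _
        rw [Set.mem_Ioi, not_lt]
        exact hr.trans (abs_nonneg x)
      simp only [hz, lintegral_zero]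
      exact zero_le
    · rw [Set.indicator_of_mem (Set.mem_Ioi.2 hr)]
      have hb : 0 < 2 * s / r := by positivity
      have key : ∀ x : ℝ, ENNReal.ofReal r * Φ x r
          = ENNReal.ofReal (Real.exp (-c₂ * r ^ 2)) *
            ENNReal.ofReal (Real.exp (-c₁ * ((r + A / r) + (2 * s / r) * x) ^ 2)) := by
        intro x
        rw [hΦdef]
        simp only
        rw [← ENNReal.ofReal_mul hr.le, ← ENNReal.ofReal_mul (Real.exp_pos _).le]
        congr 1
        have harg : r + 2 * (s * x) / r + A / r = (r + A / r) + (2 * s / r) * x := by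
          ring
        rw [harg]
        field_simp
      calc ∫⁻ x, G x r ≤ ∫⁻ x, ENNReal.ofReal (Real.exp (-c₂ * r ^ 2)) *
            ENNReal.ofReal (Real.exp (-c₁ * ((r + A / r) + (2 * s / r) * x) ^ 2)) := by
            refine lintegral_mono fun x => ?_
            rw [← key x, hGdef]
            exact Set.indicator_le_self _ _ r
        _ = ENNReal.ofReal (Real.exp (-c₂ * r ^ 2)) *
            ∫⁻ x, ENNReal.ofReal (Real.exp (-c₁ * ((r + A / r) + (2 * s / r) * x) ^ 2)) :=
            lintegral_const_mul' _ _ ENNReal.ofReal_ne_top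
        _ = ENNReal.ofReal (Real.exp (-c₂ * r ^ 2)) *
            ENNReal.ofReal (Real.sqrt (π / c₁) / (2 * s / r)) := by
            rw [gauss_affine c₁ (r + A / r) (2 * s / r) hc₁ hb]
        _ = ENNReal.ofReal (Real.sqrt (π / c₁) / (2 * s) * (r * Real.exp (-c₂ * r ^ 2))) := by
            rw [← ENNReal.ofReal_mul (Real.exp_pos _).le]
            congr 1
            field_simp
  -- Step 8 : the outer integral of the bound
  have step8 : ∫⁻ r : ℝ, (Ioi (0:ℝ)).indicator
      (fun r => ENNReal.ofReal (Real.sqrt (π / c₁) / (2 * s) * (r * Real.exp (-c₂ * r ^ 2)))) r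
      = ENNReal.ofReal (Real.sqrt (π / c₁) / (2 * s) * (2 * c₂)⁻¹) := by
    rw [lintegral_indicator measurableSet_Ioi]
    have hnn : ∀ᵐ r ∂(volume.restrict (Ioi (0:ℝ))), 0 ≤ r * Real.exp (-c₂ * r ^ 2) := by
      refine (ae_restrict_iff' measurableSet_Ioi).2 (Filter.Eventually.of_forall fun r hr => ?_)
      exact mul_nonneg (le_of_lt hr) (Real.exp_pos _).le
    have hofr : ∀ r : ℝ, ENNReal.ofReal (Real.sqrt (π / c₁) / (2 * s) * (r * Real.exp (-c₂ * r ^ 2)))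
        = ENNReal.ofReal (Real.sqrt (π / c₁) / (2 * s)) * ENNReal.ofReal (r * Real.exp (-c₂ * r ^ 2)) := by
      intro r
      rw [← ENNReal.ofReal_mul (by positivity)]
    simp only [hofr]
    rw [lintegral_const_mul' _ _ ENNReal.ofReal_ne_top,
      ← ofReal_integral_eq_lintegral_ofReal (integrable_mul_exp_neg_mul_sq hc₂).integrableOn hnn,
      integral_r_exp c₂ hc₂, ← ENNReal.ofReal_mul (by positivity)]
  -- assemble everything
  calc ∫⁻ g : EuclideanSpace ℝ (Fin 3), ENNReal.ofReal (F g)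
      = ∫⁻ x : ℝ, ∫⁻ w : Fin 2 → ℝ, Φ x (Real.sqrt (x ^ 2 + ∑ j, (w j) ^ 2)) := by
        rw [step1, step2, step3, step4]
    _ = ∫⁻ x : ℝ, c₀ * ∫⁻ r in Ioi |x|, ENNReal.ofReal r * Φ x r :=
        lintegral_congr fun x => step5 x
    _ = c₀ * ∫⁻ x : ℝ, ∫⁻ r in Ioi |x|, ENNReal.ofReal r * Φ x r :=
        lintegral_const_mul' _ _ hc₀top
    _ = c₀ * ∫⁻ x : ℝ, ∫⁻ r, G x r := by
        congr 1
        refine lintegral_congr fun x => ?_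
        rw [hGdef]
        rw [lintegral_indicator measurableSet_Ioi]
    _ = c₀ * ∫⁻ r : ℝ, ∫⁻ x, G x r := by rw [step6]
    _ ≤ c₀ * ∫⁻ r : ℝ, (Ioi (0:ℝ)).indicator
          (fun r => ENNReal.ofReal (Real.sqrt (π / c₁) / (2 * s) * (r * Real.exp (-c₂ * r ^ 2)))) r :=
        mul_le_mul_right (lintegral_mono step7) c₀
    _ = c₀ * ENNReal.ofReal (Real.sqrt (π / c₁) / (2 * s) * (2 * c₂)⁻¹) := by rw [step8]
    _ = ENNReal.ofReal (C / s) := by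
        rw [← ENNReal.ofReal_toReal hc₀top, ← ENNReal.ofReal_mul hc₀real.le]
        congr 1
        rw [hCdef]
        field_simp
        ring
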